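/- For σ > 0 and β < 0, the mass function M(ω) = (1/(4πω)) · (-(log(√ω/2)+γ)/(2πβ))^(1/σ) is strictly increasing on (ω̃, ω̄) and strictly decreasing on (ω̄, +∞), where ω̃ = 4e^(-2γ) and ω̄ = 4e^(-2γ+1/σ). -/

import Mathlib

noncomputable section
open Real Filter Set Topology

/-- The Euler–Mascheroni constant. -/
def euγ : ℝ := Real.eulerMascheroniConstant

/-- The threshold frequency. -/
def ωtilde : ℝ := 4 * Real.exp (-2 * euγ)

/-- The charge of the standing wave at frequency ω. -/
def charge (σ β ω : ℝ) : ℝ :=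
  (-(Real.log (Real.sqrt ω / 2) + euγ) / (2 * π * β)) ^ (1 / (2 * σ))

/-- The inverse change of variables, frequency as a function of the charge. -/
def ωof (σ β q : ℝ) : ℝ := 4 * Real.exp (-2 * euγ - 4 * π * β * q ^ (2 * σ))

/-- Energy of the standing wave as a function of the frequency. -/
def Eω (σ β ω : ℝ) : ℝ :=
  (σ * (Real.log (Real.sqrt ω / 2) + euγ) / (2 * π * (σ + 1)) - 1 / (4 * π)) *
    (-(Real.log (Real.sqrt ω / 2) + euγ) / (2 * π * β)) ^ (1 / σ)

/-- Energy of the standing wave as a function of the charge. -/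
def Echarge (σ β q : ℝ) : ℝ := -q ^ 2 / (4 * π) - σ * β * q ^ (2 * σ + 2) / (σ + 1)

/-- Mass of the standing wave as a function of the frequency. -/
def Mω (σ β ω : ℝ) : ℝ :=
  (1 / (4 * π * ω)) * (-(Real.log (Real.sqrt ω / 2) + euγ) / (2 * π * β)) ^ (1 / σ)

/-- Mass of the standing wave as a function of the charge. -/
def Mq (σ β q : ℝ) : ℝ := q ^ 2 * Real.exp (2 * euγ + 4 * π * β * q ^ (2 * σ)) / (16 * π)

/-- The minimizing charge. -/
def qbar (σ β : ℝ) : ℝ := (-(4 * π * σ * β)) ^ (-(1 / (2 * σ)) : ℝ)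

/-- The blow-up energy threshold. -/
def Λ (σ β : ℝ) : ℝ := -σ / (4 * π * (σ + 1) * (-(4 * π * σ * β)) ^ (1 / σ))

/-- The frequency of minimal energy / maximal mass. -/
def ωbar (σ : ℝ) : ℝ := 4 * Real.exp (-2 * euγ + 1 / σ)

/-- The maximal mass. -/
def μbar (σ β : ℝ) : ℝ :=
  Real.exp (2 * euγ - 1 / σ) / (16 * π * (-(4 * π * σ * β)) ^ (1 / σ))

private lemma L_log {ω : ℝ} (hω : 0 < ω) :
    Real.log (Real.sqrt ω / 2) + euγ = Real.log ω / 2 - Real.log 2 + euγ := by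
  rw [Real.log_div (by positivity) two_ne_zero, Real.log_sqrt hω.le]

private lemma log_ωtilde : Real.log ωtilde = 2 * Real.log 2 - 2 * euγ := by
  rw [ωtilde, Real.log_mul (by norm_num) (Real.exp_ne_zero _), Real.log_exp,
      show (4:ℝ) = 2^2 by norm_num, Real.log_pow]
  push_cast; ring

private lemma log_ωbar (σ : ℝ) : Real.log (ωbar σ) = 2 * Real.log 2 - 2 * euγ + 1/σ := by
  rw [ωbar, Real.log_mul (by norm_num) (Real.exp_ne_zero _), Real.log_exp,
      show (4:ℝ) = 2^2 by norm_num, Real.log_pow]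
  push_cast; ring

private lemma g_hasDerivAt (p : ℝ) {t : ℝ} (ht : 0 < t) :
    HasDerivAt (fun t : ℝ => Real.exp (-2*t) * t ^ p)
      (Real.exp (-2*t) * t ^ (p-1) * (p - 2*t)) t := by
  have h1 : HasDerivAt (fun t : ℝ => Real.exp (-2*t)) (Real.exp (-2*t) * (-2)) t := by
    simpa using ((hasDerivAt_id t).const_mul (-2)).exp
  have h2 : HasDerivAt (fun t : ℝ => t ^ p) (p * t ^ (p-1)) t :=
    Real.hasDerivAt_rpow_const (Or.inl ht.ne')
  have h3 := h1.mul h2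
  refine h3.congr_deriv ?_
  have htp : t ^ (p - 1) * t = t ^ p := by
    rw [← Real.rpow_add_one ht.ne' (p-1)]; ring_nf
  rw [← htp]; ring

private lemma g_cont (p : ℝ) (hp : 0 < p) :
    Continuous (fun t : ℝ => Real.exp (-2*t) * t ^ p) := by
  apply (Real.continuous_exp.comp (continuous_const.mul continuous_id)).mul
  rw [continuous_iff_continuousAt]
  exact fun t => Real.continuousAt_rpow_const t p (Or.inr hp.le)

private lemma g_mono (p : ℝ) (hp : 0 < p) :
    StrictMonoOn (fun t : ℝ => Real.exp (-2*t) * t ^ p) (Set.Icc 0 (p/2)) := by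
  apply strictMonoOn_of_deriv_pos (convex_Icc _ _) (g_cont p hp).continuousOn
  intro t ht
  rw [interior_Icc] at ht
  rw [(g_hasDerivAt p ht.1).deriv]
  have h1 : 0 < t ^ (p-1) := Real.rpow_pos_of_pos ht.1 _
  have h2 : 0 < p - 2*t := by linarith [ht.2]
  positivity

private lemma g_anti (p : ℝ) (hp : 0 < p) :
    StrictAntiOn (fun t : ℝ => Real.exp (-2*t) * t ^ p) (Set.Ici (p/2)) := by
  apply strictAntiOn_of_deriv_neg (convex_Ici _) (g_cont p hp).continuousOn
  intro t ht
  rw [interior_Ici] at ht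
  have ht0 : 0 < t := lt_trans (by positivity) ht
  rw [(g_hasDerivAt p ht0).deriv]
  have h1 : 0 < Real.exp (-2*t) * t ^ (p-1) := by
    have := Real.rpow_pos_of_pos ht0 (p-1); positivity
  have h2 : p - 2*t < 0 := by have := mem_Ioi.mp ht; linarith
  exact mul_neg_of_pos_of_neg h1 h2

private lemma Mω_eq (σ β : ℝ) (hβ : β < 0) {ω : ℝ} (hωpos : 0 < ω)
    (hL0 : 0 ≤ Real.log (Real.sqrt ω / 2) + euγ) :
    Mω σ β ω = (Real.exp (2*euγ) * (-(1/(2*π*β))) ^ (1/σ) / (16*π)) *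
      (Real.exp (-2 * (Real.log (Real.sqrt ω / 2) + euγ)) *
        (Real.log (Real.sqrt ω / 2) + euγ) ^ (1/σ)) := by
  have hπ := Real.pi_pos
  set L := Real.log (Real.sqrt ω / 2) + euγ with hLdef
  have h2πβ : 2*π*β < 0 := mul_neg_of_pos_of_neg (by positivity) hβ
  have hc : 0 < -(1/(2*π*β)) := by
    have : 1/(2*π*β) < 0 := one_div_neg.mpr h2πβ
    linarith
  have h1 : -L / (2*π*β) = (-(1/(2*π*β))) * L := by field_simp
  have hLval : L = Real.log ω / 2 - Real.log 2 + euγ := L_log hωpos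
  have hexp : Real.exp (-2*L) = 4 / ω / Real.exp (2*euγ) := by
    rw [eq_div_iff (Real.exp_ne_zero _), ← Real.exp_add, hLval]
    have h4 : -2*(Real.log ω / 2 - Real.log 2 + euγ) + 2*euγ = Real.log (4/ω) := by
      rw [Real.log_div (by norm_num) hωpos.ne', show (4:ℝ) = 2^2 by norm_num, Real.log_pow]
      push_cast; ring
    rw [h4, Real.exp_log (by positivity)]
  rw [Mω, ← hLdef, h1, Real.mul_rpow hc.le hL0, hexp]
  have hx := Real.exp_ne_zero (2*euγ)
  field_simp
  ring

theorem stmt7 (σ β : ℝ) (hσ : 0 < σ) (hβ : β < 0) :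
    StrictMonoOn (Mω σ β) (Set.Ioo ωtilde (ωbar σ)) ∧
    StrictAntiOn (Mω σ β) (Set.Ioi (ωbar σ)) := by
  have hπ := Real.pi_pos
  have hωt : (0:ℝ) < ωtilde := by rw [ωtilde]; positivity
  have hωb : (0:ℝ) < ωbar σ := by rw [ωbar]; positivity
  have htb : ωtilde < ωbar σ := by
    rw [ωtilde, ωbar]
    have h0 : (0:ℝ) < 1/σ := by positivity
    have : -2*euγ < -2*euγ + 1/σ := by linarith
    nlinarith [Real.exp_lt_exp.mpr this, Real.exp_pos (-2*euγ)]
  set p := 1/σ with hpdef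
  have hp : 0 < p := by positivity
  -- L function facts
  have hLlt : ∀ x y : ℝ, 0 < x → x < y →
      Real.log (Real.sqrt x / 2) + euγ < Real.log (Real.sqrt y / 2) + euγ := by
    intro x y hx hxy
    rw [L_log hx, L_log (lt_trans hx hxy)]
    have := Real.log_lt_log hx hxy
    linarith
  have hLpos : ∀ ω : ℝ, ωtilde < ω → 0 < Real.log (Real.sqrt ω / 2) + euγ := by
    intro ω hω
    rw [L_log (lt_trans hωt hω)]
    have := Real.log_lt_log hωt hω
    rw [log_ωtilde] at this
    linarith
  have hLlt_bar : ∀ ω : ℝ, ωtilde < ω → ω < ωbar σ →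
      Real.log (Real.sqrt ω / 2) + euγ < p/2 := by
    intro ω hω1 hω2
    rw [L_log (lt_trans hωt hω1)]
    have := Real.log_lt_log (lt_trans hωt hω1) hω2
    rw [log_ωbar] at this
    rw [hpdef]
    linarith
  have hLgt_bar : ∀ ω : ℝ, ωbar σ < ω → p/2 < Real.log (Real.sqrt ω / 2) + euγ := by
    intro ω hω
    rw [L_log (lt_trans hωb hω)]
    have := Real.log_lt_log hωb hω
    rw [log_ωbar] at this
    rw [hpdef]
    linarith
  have h2πβ : 2*π*β < 0 := mul_neg_of_pos_of_neg (by positivity) hβ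
  have hc : 0 < -(1/(2*π*β)) := by
    have : 1/(2*π*β) < 0 := one_div_neg.mpr h2πβ
    linarith
  have hK : 0 < Real.exp (2*euγ) * (-(1/(2*π*β))) ^ (1/σ) / (16*π) := by
    have := Real.rpow_pos_of_pos hc (1/σ); positivity
  constructor
  · intro x hx y hy hxy
    have hx0 : 0 < x := lt_trans hωt hx.1
    have hy0 : 0 < y := lt_trans hωt hy.1
    rw [Mω_eq σ β hβ hx0 (hLpos x hx.1).le, Mω_eq σ β hβ hy0 (hLpos y hy.1).le]
    apply mul_lt_mul_of_pos_left _ hK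
    exact g_mono p hp ⟨(hLpos x hx.1).le, (hLlt_bar x hx.1 hx.2).le⟩
      ⟨(hLpos y hy.1).le, (hLlt_bar y hy.1 hy.2).le⟩ (hLlt x y hx0 hxy)
  · intro x hx y hy hxy
    have hx' : ωtilde < x := lt_trans htb hx
    have hy' : ωtilde < y := lt_trans htb hy
    have hx0 : 0 < x := lt_trans hωt hx'
    have hy0 : 0 < y := lt_trans hωt hy'
    rw [Mω_eq σ β hβ hx0 (hLpos x hx').le, Mω_eq σ β hβ hy0 (hLpos y hy').le]
    apply mul_lt_mul_of_pos_left _ hK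
    exact g_anti p hp (le_of_lt (hLgt_bar x hx)) (le_of_lt (hLgt_bar y hy))
      (hLlt x y hx0 hxy)
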